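/- arXiv:1106.2458 — 2 statements merged into one kernel-verified Lean document; each statement's English description precedes it below -/
import Mathlib

section
/- The action of the rotation β of the dihedral group D_{n+2} on Y_n, transported through the bijection Λ_{n+2} from triangulations of the (n+2)-gon, is given as follows: if A ∈ Y_n has rows of lengths a_i with a_i ≤ n - i, then βA has rows of lengths a_i + 1 for those i with a_i < n - i, and rows of length 0 otherwise, decreasingly ordered. -/
/-- `(a,b)` is a diagonal of the convex `n`-gon with vertices `0, …, n-1`. -/
def IsDiagonal (n a b : ℕ) : Prop :=
  a + 2 ≤ b ∧ b ≤ n - 1 ∧ ¬(a = 0 ∧ b = n - 1)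

/-- Two diagonals (as ordered pairs, smaller endpoint first) cross each other. -/
def Crossing (p q : ℕ × ℕ) : Prop :=
  (p.1 < q.1 ∧ q.1 < p.2 ∧ p.2 < q.2) ∨ (q.1 < p.1 ∧ p.1 < q.2 ∧ q.2 < p.2)

/-- A triangulation of the convex `n`-gon: a set of `n - 3` pairwise
non-crossing diagonals (equivalently, a maximal non-crossing set of diagonals). -/
def IsTriangulation (n : ℕ) (T : Finset (ℕ × ℕ)) : Prop :=
  (∀ p ∈ T, IsDiagonal n p.1 p.2) ∧
  (∀ p ∈ T, ∀ q ∈ T, ¬ Crossing p q) ∧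
  T.card = n - 3
/-- The list of tails (smaller endpoints) of the diagonals of `T`,
sorted in decreasing order. -/
def tails (T : Finset (ℕ × ℕ)) : List ℕ :=
  (T.val.map Prod.fst).sort (· ≥ ·)

/-- `lam T k` is the `k`-th largest tail `λ_k` of a diagonal of `T`
(`k ≥ 1`; it is `0` if `T` has fewer than `k` diagonals). -/
def lam (T : Finset (ℕ × ℕ)) : ℕ → ℕ :=
  fun k => if k = 0 then 0 else (tails T).getD (k - 1) 0

/-- The partition `f` (with `f k` the length of row `k`, `k ≥ 1`) lies in `Y_n`:
`f k ≤ n - k` for all `k ≥ 1`. -/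
def InY (n : ℕ) (f : ℕ → ℕ) : Prop :=
  f 0 = 0 ∧ (∀ k, 1 ≤ k → f (k + 1) ≤ f k) ∧ (∀ k, 1 ≤ k → f k ≤ n - k)

/-- The rotation `β : v ↦ v + 1 (mod m)` applied to a diagonal, with endpoints
reordered so that the smaller comes first. -/
def rotDiag (m : ℕ) (p : ℕ × ℕ) : ℕ × ℕ :=
  (min ((p.1 + 1) % m) ((p.2 + 1) % m), max ((p.1 + 1) % m) ((p.2 + 1) % m))

/-- The rotation `β` applied to a triangulation. -/
def rotTri (m : ℕ) (T : Finset (ℕ × ℕ)) : Finset (ℕ × ℕ) :=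
  T.image (rotDiag m)

/-- The multiset of the lengths of rows `1, …, B` of the diagram `f`. -/
def rowMultiset (f : ℕ → ℕ) (B : ℕ) : Multiset ℕ :=
  (Multiset.range B).map (fun j => f (j + 1))


lemma crossing_reflect {φ : ℕ → ℕ} {P : ℕ → Prop}
    (hmono : ∀ {x y}, P x → P y → x < y → φ x < φ y)
    {a b c d : ℕ} (ha : P a) (hb : P b) (hc : P c) (hd : P d)
    (h : Crossing (φ a, φ b) (φ c, φ d)) : Crossing (a, b) (c, d) := by
  have key : ∀ {x y}, P x → P y → φ x < φ y → x < y := by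
    intro x y hx hy hlt
    rcases lt_trichotomy x y with h' | rfl | h'
    · exact h'
    · omega
    · exact absurd (hmono hy hx h') (by omega)
  unfold Crossing at h ⊢
  simp only at h ⊢
  rcases h with ⟨h1, h2, h3⟩ | ⟨h1, h2, h3⟩
  · exact Or.inl ⟨key ha hc h1, key hc hb h2, key hb hd h3⟩
  · exact Or.inr ⟨key hc ha h1, key ha hd h2, key hd hb h3⟩

lemma noncross_card_le : ∀ (m : ℕ) (D : Finset (ℕ × ℕ)),
    (∀ p ∈ D, IsDiagonal m p.1 p.2) → (∀ p ∈ D, ∀ q ∈ D, ¬ Crossing p q) →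
    D.card ≤ m - 3 := by
  intro m
  induction m using Nat.strong_induction_on with
  | _ m IH =>
  intro D hdiag hnc
  rcases D.eq_empty_or_nonempty with rfl | hne
  · simp
  obtain ⟨d, hd, hmin⟩ := D.exists_min_image (fun p => p.2 - p.1) hne
  obtain ⟨hd1, hd2, hd3⟩ := hdiag d hd
  have hm4 : 4 ≤ m := by omega
  -- no endpoint of another diagonal lies strictly inside (d.1, d.2)
  have hin : ∀ q ∈ D, (q.1 ≤ d.1 ∨ d.2 ≤ q.1) ∧ (q.2 ≤ d.1 ∨ d.2 ≤ q.2) := by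
    intro q hq
    obtain ⟨hq1, hq2, hq3⟩ := hdiag q hq
    have hcr1 := hnc d hd q hq
    have hcr2 := hnc q hq d hd
    have hsp := hmin q hq
    unfold Crossing at hcr1 hcr2
    constructor <;> omega
  set φ : ℕ → ℕ := fun x => if x ≤ d.1 then x else x - 1 with hφ
  have hmono : ∀ {x y : ℕ}, (x ≤ d.1 ∨ d.2 ≤ x) → (y ≤ d.1 ∨ d.2 ≤ y) → x < y → φ x < φ y := by
    intro x y hx hy hxy
    simp only [hφ]
    split_ifs <;> omega
  set F : ℕ × ℕ → ℕ × ℕ := fun p => (φ p.1, φ p.2) with hF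
  have hinj : Set.InjOn F (D.erase d) := by
    intro p hp q hq hpq
    simp only [Finset.coe_erase, Set.mem_diff, Finset.mem_coe] at hp hq
    obtain ⟨hin1, hin2⟩ := hin p hp.1
    obtain ⟨hin3, hin4⟩ := hin q hq.1
    simp only [hF, Prod.ext_iff, hφ] at hpq ⊢
    constructor
    · rcases hpq with ⟨h1, _⟩
      split_ifs at h1 <;> omega
    · rcases hpq with ⟨_, h2⟩
      split_ifs at h2 <;> omega
  set D' := (D.erase d).image F with hD'
  have hcard' : D'.card = D.card - 1 := by
    rw [hD', Finset.card_image_of_injOn hinj, Finset.card_erase_of_mem hd]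
  have hmem' : ∀ p' ∈ D', ∃ q ∈ D, q ≠ d ∧ p' = F q := by
    intro p' hp'
    rw [hD', Finset.mem_image] at hp'
    obtain ⟨q, hq, rfl⟩ := hp'
    exact ⟨q, Finset.mem_of_mem_erase hq, Finset.ne_of_mem_erase hq, rfl⟩
  have hdiag' : ∀ p ∈ D', IsDiagonal (m - 1) p.1 p.2 := by
    intro p' hp'
    obtain ⟨q, hq, hqd, rfl⟩ := hmem' p' hp'
    obtain ⟨hq1, hq2, hq3⟩ := hdiag q hq
    obtain ⟨hin1, hin2⟩ := hin q hq
    have hqd' : q.1 ≠ d.1 ∨ q.2 ≠ d.2 := by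
      by_contra h
      push_neg at h
      exact hqd (Prod.ext h.1 h.2)
    unfold IsDiagonal
    simp only [hF, hφ]
    split_ifs <;> omega
  have hnc' : ∀ p ∈ D', ∀ q ∈ D', ¬ Crossing p q := by
    intro p' hp' q' hq' hcr
    obtain ⟨p, hp, hpd, rfl⟩ := hmem' p' hp'
    obtain ⟨q, hq, hqd, rfl⟩ := hmem' q' hq'
    obtain ⟨hin1, hin2⟩ := hin p hp
    obtain ⟨hin3, hin4⟩ := hin q hq
    have := crossing_reflect (P := fun x => x ≤ d.1 ∨ d.2 ≤ x) (φ := φ)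
      (fun hx hy => hmono hx hy) hin1 hin2 hin3 hin4 hcr
    exact hnc p hp q hq this
  have := IH (m - 1) (by omega) D' hdiag' hnc'
  omega

section
variable {m : ℕ} {D : Finset (ℕ × ℕ)}

/-- refined count of diagonals with tail ≥ t, excluding `(t, m-1)`. -/
lemma tail_filter_card (hdiag : ∀ p ∈ D, IsDiagonal m p.1 p.2) (hnc : ∀ p ∈ D, ∀ q ∈ D, ¬ Crossing p q)
    (t : ℕ) :
    ((D.filter (fun p => t ≤ p.1)).erase (t, m - 1)).card ≤ m - t - 3 := by
  set E := (D.filter (fun p => t ≤ p.1)).erase (t, m - 1) with hE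
  have hmemE : ∀ p ∈ E, p ∈ D ∧ t ≤ p.1 ∧ (p.1 ≠ t ∨ p.2 ≠ m - 1) := by
    intro p hp
    have h1 := Finset.mem_of_mem_erase hp
    have h2 := Finset.ne_of_mem_erase hp
    rw [Finset.mem_filter] at h1
    refine ⟨h1.1, h1.2, ?_⟩
    by_contra h
    push_neg at h
    exact h2 (Prod.ext h.1 h.2)
  set F : ℕ × ℕ → ℕ × ℕ := fun p => (p.1 - t, p.2 - t) with hF
  have hmono : ∀ {x y : ℕ}, t ≤ x → t ≤ y → x < y → x - t < y - t := by omega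
  have hinj : Set.InjOn F E := by
    intro p hp q hq hpq
    obtain ⟨hpD, hpt, -⟩ := hmemE p (by exact hp)
    obtain ⟨hqD, hqt, -⟩ := hmemE q (by exact hq)
    obtain ⟨hp1, -, -⟩ := hdiag p hpD
    obtain ⟨hq1, -, -⟩ := hdiag q hqD
    simp only [hF, Prod.ext_iff] at hpq ⊢
    omega
  have hdiag' : ∀ p ∈ E.image F, IsDiagonal (m - t) p.1 p.2 := by
    intro p' hp'
    rw [Finset.mem_image] at hp'
    obtain ⟨q, hq, rfl⟩ := hp'
    obtain ⟨hqD, hqt, hqne⟩ := hmemE q hq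
    obtain ⟨hq1, hq2, hq3⟩ := hdiag q hqD
    unfold IsDiagonal
    simp only [hF]
    omega
  have hnc' : ∀ p ∈ E.image F, ∀ q ∈ E.image F, ¬ Crossing p q := by
    intro p' hp' q' hq' hcr
    rw [Finset.mem_image] at hp' hq'
    obtain ⟨p, hp, rfl⟩ := hp'
    obtain ⟨q, hq, rfl⟩ := hq'
    obtain ⟨hpD, hpt, -⟩ := hmemE p hp
    obtain ⟨hqD, hqt, -⟩ := hmemE q hq
    obtain ⟨hp1, -, -⟩ := hdiag p hpD
    obtain ⟨hq1, -, -⟩ := hdiag q hqD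
    have := crossing_reflect (P := fun x => t ≤ x) (φ := fun x => x - t)
      (fun hx hy => hmono hx hy) hpt (by omega) hqt (by omega) hcr
    exact hnc p hpD q hqD this
  have := noncross_card_le (m - t) (E.image F) hdiag' hnc'
  rw [Finset.card_image_of_injOn hinj] at this
  omega

lemma cBound (hdiag : ∀ p ∈ D, IsDiagonal m p.1 p.2) (hnc : ∀ p ∈ D, ∀ q ∈ D, ¬ Crossing p q)
    (t : ℕ) : (D.filter (fun p => t ≤ p.1)).card ≤ m - t - 2 := by
  rcases le_or_gt (t + 3) m with h | h
  · have := tail_filter_card hdiag hnc t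
    have h2 := Finset.card_erase_of_mem (s := D.filter (fun p => t ≤ p.1)) (a := (t, m - 1))
    by_cases hm : (t, m - 1) ∈ D.filter (fun p => t ≤ p.1)
    · have := h2 hm
      omega
    · rw [Finset.erase_eq_of_notMem hm] at this
      omega
  · have : D.filter (fun p => t ≤ p.1) = ∅ := by
      rw [Finset.filter_eq_empty_iff]
      intro p hp hpt
      obtain ⟨h1, h2, -⟩ := hdiag p hp
      omega
    rw [this]
    simp

lemma cBound' (hdiag : ∀ p ∈ D, IsDiagonal m p.1 p.2) (hnc : ∀ p ∈ D, ∀ q ∈ D, ¬ Crossing p q)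
    (t : ℕ) (h : (t, m - 1) ∉ D) :
    (D.filter (fun p => t ≤ p.1)).card ≤ m - t - 3 := by
  have := tail_filter_card hdiag hnc t
  rwa [Finset.erase_eq_of_notMem (fun hc => h (Finset.mem_of_mem_filter _ hc))] at this

lemma head_mem_card (hdiag : ∀ p ∈ D, IsDiagonal m p.1 p.2) (hnc : ∀ p ∈ D, ∀ q ∈ D, ¬ Crossing p q)
    (hcard : D.card = m - 3) (t : ℕ) (hmem : (t, m - 1) ∈ D) :
    m - t - 2 ≤ (D.filter (fun p => t ≤ p.1)).card := by
  obtain ⟨ht1, ht2, ht3⟩ := hdiag _ hmem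
  simp only at ht1 ht2 ht3
  have ht : 1 ≤ t := by
    rcases Nat.eq_zero_or_pos t with rfl | h
    · exact absurd ⟨rfl, trivial⟩ ht3
    · exact h
  have htm : t + 3 ≤ m := by omega
  -- the diagonals with tail < t
  set L := D.filter (fun p => ¬ t ≤ p.1) with hL
  have hmemL : ∀ p ∈ L, p ∈ D ∧ p.1 < t ∧ (p.2 ≤ t ∨ p.2 = m - 1) := by
    intro p hp
    rw [hL, Finset.mem_filter] at hp
    obtain ⟨hpD, hpt⟩ := hp
    obtain ⟨hp1, hp2, hp3⟩ := hdiag p hpD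
    refine ⟨hpD, by omega, ?_⟩
    have := hnc (t, m - 1) hmem p hpD
    unfold Crossing at this
    simp only at this
    omega
  set ψ : ℕ → ℕ := fun x => if x ≤ t then x else t + 1 with hψ
  set F : ℕ × ℕ → ℕ × ℕ := fun p => (ψ p.1, ψ p.2) with hF
  have hmono : ∀ {x y : ℕ}, (x ≤ t ∨ x = m - 1) → (y ≤ t ∨ y = m - 1) → x < y → ψ x < ψ y := by
    intro x y hx hy hxy
    simp only [hψ]
    split_ifs <;> omega
  have hinj : Set.InjOn F L := by
    intro p hp q hq hpq
    obtain ⟨hpD, hpt, hp2⟩ := hmemL p hp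
    obtain ⟨hqD, hqt, hq2⟩ := hmemL q hq
    obtain ⟨hp1, hp2', -⟩ := hdiag p hpD
    obtain ⟨hq1, hq2', -⟩ := hdiag q hqD
    simp only [hF, hψ, Prod.ext_iff] at hpq ⊢
    obtain ⟨e1, e2⟩ := hpq
    split_ifs at e1 e2 <;> omega
  have hdiag' : ∀ p ∈ L.image F, IsDiagonal (t + 2) p.1 p.2 := by
    intro p' hp'
    rw [Finset.mem_image] at hp'
    obtain ⟨q, hq, rfl⟩ := hp'
    obtain ⟨hqD, hqt, hq2⟩ := hmemL q hq
    obtain ⟨hq1, hq2', hq3⟩ := hdiag q hqD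
    unfold IsDiagonal
    simp only [hF, hψ]
    split_ifs <;> omega
  have hnc' : ∀ p ∈ L.image F, ∀ q ∈ L.image F, ¬ Crossing p q := by
    intro p' hp' q' hq' hcr
    rw [Finset.mem_image] at hp' hq'
    obtain ⟨p, hp, rfl⟩ := hp'
    obtain ⟨q, hq, rfl⟩ := hq'
    obtain ⟨hpD, hpt, hpd⟩ := hmemL p hp
    obtain ⟨hqD, hqt, hqd⟩ := hmemL q hq
    have := crossing_reflect (P := fun x => x ≤ t ∨ x = m - 1) (φ := ψ)
      (fun hx hy => hmono hx hy) (Or.inl (by omega)) (by omega) (Or.inl (by omega)) (by omega) hcr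
    exact hnc p hpD q hqD this
  have hcardL : L.card ≤ t - 1 := by
    have := noncross_card_le (t + 2) (L.image F) hdiag' hnc'
    rw [Finset.card_image_of_injOn hinj] at this
    omega
  have hsplit : (D.filter (fun p => t ≤ p.1)).card + L.card = D.card := by
    rw [hL]
    exact Finset.card_filter_add_card_filter_not (p := fun p : ℕ × ℕ => t ≤ p.1)
  omega

lemma mem_head_iff (hdiag : ∀ p ∈ D, IsDiagonal m p.1 p.2) (hnc : ∀ p ∈ D, ∀ q ∈ D, ¬ Crossing p q)
    (hcard : D.card = m - 3) (t : ℕ) (ht : 1 ≤ t) (htm : t + 3 ≤ m) :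
    (t, m - 1) ∈ D ↔ m - t - 2 ≤ (D.filter (fun p => t ≤ p.1)).card := by
  constructor
  · exact head_mem_card hdiag hnc hcard t
  · intro h
    by_contra hmem
    have := cBound' hdiag hnc t hmem
    omega

end

lemma getD_ge_iff : ∀ {l : List ℕ}, l.Pairwise (· ≥ ·) → ∀ {t : ℕ}, 1 ≤ t → ∀ (k : ℕ),
    (t ≤ l.getD k 0 ↔ k < l.countP (fun x => decide (t ≤ x))) := by
  intro l
  induction l with
  | nil =>
    intro _ t ht k
    simp [List.getD]
    omega
  | cons x xs ih =>
    intro hl t ht k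
    rw [List.pairwise_cons] at hl
    obtain ⟨hx, hxs⟩ := hl
    have hzero : ¬ t ≤ x → xs.countP (fun y => decide (t ≤ y)) = 0 := by
      intro h
      rw [List.countP_eq_zero]
      intro y hy
      simp only [decide_eq_true_eq]
      have := hx y hy
      omega
    cases k with
    | zero =>
      rw [List.getD_cons_zero, List.countP_cons]
      by_cases h : t ≤ x
      · simp [h]
      · have := hzero h
        simp [h, this]
    | succ k =>
      rw [List.getD_cons_succ, ih hxs ht k, List.countP_cons]
      by_cases h : t ≤ x
      · simp [h]
      · have := hzero h
        simp [h, this]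

lemma countP_le_split (M : Multiset ℕ) (a : ℕ) :
    M.countP (fun x => a ≤ x) = M.count a + M.countP (fun x => a + 1 ≤ x) := by
  induction M using Multiset.induction_on with
  | empty => simp
  | cons b s ih =>
    rw [Multiset.countP_cons, Multiset.countP_cons, Multiset.count_cons, ih]
    have e1 : (if a ≤ b then (1:ℕ) else 0) = (if a = b then 1 else 0) + (if a + 1 ≤ b then 1 else 0) := by
      split_ifs <;> omega
    rw [e1]
    ring

lemma multiset_eq_of_countP {M N : Multiset ℕ}
    (h : ∀ t, M.countP (fun x => t ≤ x) = N.countP (fun x => t ≤ x)) : M = N := by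
  ext a
  have h1 := countP_le_split M a
  have h2 := countP_le_split N a
  have h3 := h a
  have h4 := h (a + 1)
  omega

lemma rowMultiset_lam (T' : Finset (ℕ × ℕ)) {B : ℕ} (h : (tails T').length = B) :
    rowMultiset (lam T') B = T'.val.map Prod.fst := by
  have key : (List.range B).map (fun j => lam T' (j + 1)) = tails T' := by
    apply List.ext_getElem
    · simp [h]
    · intro i h1 h2
      simp only [List.getElem_map, List.getElem_range, lam, Nat.add_sub_cancel]
      rw [if_neg (by omega), List.getD_eq_getElem _ _ h2]
  have step1 : rowMultiset (lam T') B
      = (((List.range B).map (fun j => lam T' (j + 1)) : List ℕ) : Multiset ℕ) := rfl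
  rw [step1, key]
  exact Multiset.sort_eq _ _

lemma rotDiag_eq {m : ℕ} {p : ℕ × ℕ} (hp : IsDiagonal m p.1 p.2) :
    rotDiag m p = if p.2 = m - 1 then (0, p.1 + 1) else (p.1 + 1, p.2 + 1) := by
  obtain ⟨h1, h2, h3⟩ := hp
  have hm : 3 ≤ m := by omega
  have ha : (p.1 + 1) % m = p.1 + 1 := Nat.mod_eq_of_lt (by omega)
  unfold rotDiag
  by_cases h : p.2 = m - 1
  · have hb : (p.2 + 1) % m = 0 := by
      have : p.2 + 1 = m := by omega
      rw [this, Nat.mod_self]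
    rw [ha, hb, if_pos h]
    have e1 : min (p.1 + 1) 0 = 0 := by omega
    have e2 : max (p.1 + 1) 0 = p.1 + 1 := by omega
    rw [e1, e2]
  · have hb : (p.2 + 1) % m = p.2 + 1 := Nat.mod_eq_of_lt (by omega)
    rw [ha, hb, if_neg h]
    have e1 : min (p.1 + 1) (p.2 + 1) = p.1 + 1 := by omega
    have e2 : max (p.1 + 1) (p.2 + 1) = p.2 + 1 := by omega
    rw [e1, e2]

lemma rot_injOn {m : ℕ} {T : Finset (ℕ × ℕ)} (hdiag : ∀ p ∈ T, IsDiagonal m p.1 p.2) :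
    Set.InjOn (rotDiag m) T := by
  intro p hp q hq h
  rw [rotDiag_eq (hdiag p hp), rotDiag_eq (hdiag q hq)] at h
  obtain ⟨hp1, hp2, hp3⟩ := hdiag p hp
  obtain ⟨hq1, hq2, hq3⟩ := hdiag q hq
  rw [Prod.ext_iff]
  split_ifs at h <;> simp only [Prod.mk.injEq] at h <;> omega

lemma countP_map_filter {α : Type*} [DecidableEq α] (S : Finset α) (f : α → ℕ)
    (p : ℕ → Prop) [DecidablePred p] :
    (S.val.map f).countP p = (S.filter (fun a => p (f a))).card := by
  rw [Multiset.countP_map, Finset.card, Finset.filter_val]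


/-- The action of the rotation `β ∈ D_{n+2}` transported to `Y_n` via `Λ_{n+2}`:
if `A = Λ(T)` has rows `a_i ≤ n - i`, then `β A` has rows `a_i + 1` for those
`i` with `a_i < n - i` and rows of length `0` otherwise, decreasingly ordered. -/
theorem rotation_on_diagrams (n : ℕ) (T : Finset (ℕ × ℕ))
    (hT : IsTriangulation (n + 2) T) :
    rowMultiset (lam (rotTri (n + 2) T)) (n - 1) =
      (Multiset.range (n - 1)).map
        (fun j => if lam T (j + 1) < n - (j + 1) then lam T (j + 1) + 1 else 0) := by
  obtain ⟨hdiag, hnc, hcard⟩ := hT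
  have hcard' : T.card = n - 1 := by omega
  have hinj := rot_injOn hdiag
  have hval : (rotTri (n + 2) T).val = T.val.map (rotDiag (n + 2)) :=
    Finset.image_val_of_injOn hinj
  have hlen : (tails (rotTri (n + 2) T)).length = n - 1 := by
    unfold tails
    rw [Multiset.length_sort, hval]
    simpa using hcard'
  have hL : rowMultiset (lam (rotTri (n + 2) T)) (n - 1)
      = T.val.map (fun p => (rotDiag (n + 2) p).1) := by
    rw [rowMultiset_lam _ hlen, hval, Multiset.map_map]
    rfl
  rw [hL]
  -- basic facts about the sorted tails of T
  have hsort : (tails T).Pairwise (· ≥ ·) := Multiset.pairwise_sort _ _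
  have hcoe : ((tails T : List ℕ) : Multiset ℕ) = T.val.map Prod.fst := Multiset.sort_eq _ _
  have hcount : ∀ u : ℕ, (tails T).countP (fun x => decide (u ≤ x))
      = (T.filter (fun p => u ≤ p.1)).card := by
    intro u
    have h0 : ((tails T : List ℕ) : Multiset ℕ).countP (fun x => u ≤ x)
        = (tails T).countP (fun x => decide (u ≤ x)) := rfl
    rw [← h0, hcoe, countP_map_filter]
  have hlam : ∀ j : ℕ, lam T (j + 1) = (tails T).getD j 0 := by
    intro j
    simp [lam]
  -- the bound λ_{j+1} ≤ n - 1 - j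
  have hbd : ∀ j, j < n - 1 → (tails T).getD j 0 ≤ n - 1 - j := by
    intro j hj
    by_contra hcon
    push_neg at hcon
    have h1 := (getD_ge_iff hsort (t := n - j) (by omega) j).1 (by omega)
    rw [hcount] at h1
    have h2 := cBound hdiag hnc (n - j)
    omega
  -- equality case ↔ diagonal at the last vertex
  have hiff : ∀ j, j < n - 1 →
      ((tails T).getD j 0 = n - 1 - j ↔ (n - 1 - j, n + 1) ∈ T) := by
    intro j hj
    have h1 := getD_ge_iff hsort (t := n - 1 - j) (by omega) j
    rw [hcount] at h1
    have h2 := mem_head_iff hdiag hnc hcard (n - 1 - j) (by omega) (by omega)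
    have e : n + 2 - (n - 1 - j) - 2 = j + 1 := by omega
    rw [e] at h2
    have e2 : n + 2 - 1 = n + 1 := rfl
    rw [e2] at h2
    have hb := hbd j hj
    constructor
    · intro hh
      exact h2.2 (by
        have := h1.1 (by omega)
        omega)
    · intro hm
      have := h1.1 (by have := h2.1 hm; omega)
      have hge : n - 1 - j ≤ (tails T).getD j 0 := h1.2 (by have := h2.1 hm; omega)
      omega
  apply multiset_eq_of_countP
  intro t
  cases t with
  | zero =>
    have hall : ∀ (M : Multiset ℕ), M.countP (fun x => 0 ≤ x) = Multiset.card M :=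
      fun M => Multiset.countP_eq_card.2 (fun a _ => Nat.zero_le a)
    rw [hall, hall]
    simp only [Multiset.card_map, Multiset.card_range]
    exact hcard'
  | succ s =>
    -- LHS count
    have hLc : (T.val.map (fun p => (rotDiag (n + 2) p).1)).countP (fun x => s + 1 ≤ x)
        = (T.filter (fun p => s ≤ p.1 ∧ ¬ p.2 = n + 1)).card := by
      rw [countP_map_filter]
      congr 1
      apply Finset.filter_congr
      intro p hp
      obtain ⟨h1, h2, h3⟩ := hdiag p hp
      by_cases hh : p.2 = n + 1
      · have hr : rotDiag (n + 2) p = (0, p.1 + 1) := by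
          rw [rotDiag_eq (hdiag p hp)]
          exact if_pos hh
        rw [hr]
        show s + 1 ≤ 0 ↔ _
        omega
      · have hr : rotDiag (n + 2) p = (p.1 + 1, p.2 + 1) := by
          rw [rotDiag_eq (hdiag p hp)]
          exact if_neg hh
        rw [hr]
        show s + 1 ≤ p.1 + 1 ↔ _
        omega
    -- RHS count
    have hRc : ((Multiset.range (n - 1)).map
          (fun j => if lam T (j + 1) < n - (j + 1) then lam T (j + 1) + 1 else 0)).countP
            (fun x => s + 1 ≤ x)
        = ((Finset.range (n - 1)).filter
            (fun j => s ≤ (tails T).getD j 0 ∧ ¬ (tails T).getD j 0 = n - 1 - j)).card := by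
      rw [show (Multiset.range (n - 1)) = (Finset.range (n - 1)).val from rfl]
      rw [countP_map_filter]
      congr 1
      apply Finset.filter_congr
      intro j hj
      rw [Finset.mem_range] at hj
      have hb := hbd j hj
      rw [hlam]
      split_ifs with hc <;> omega
    rw [hLc, hRc]
    -- splitting the counts
    have hsplitT : (T.filter (fun p => s ≤ p.1 ∧ p.2 = n + 1)).card
        + (T.filter (fun p => s ≤ p.1 ∧ ¬ p.2 = n + 1)).card
        = (T.filter (fun p => s ≤ p.1)).card := by
      rw [← Finset.filter_filter, ← Finset.filter_filter]
      exact Finset.card_filter_add_card_filter_not (p := fun p : ℕ × ℕ => p.2 = n + 1)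
    have hsplitR : ((Finset.range (n - 1)).filter
          (fun j => s ≤ (tails T).getD j 0 ∧ (tails T).getD j 0 = n - 1 - j)).card
        + ((Finset.range (n - 1)).filter
          (fun j => s ≤ (tails T).getD j 0 ∧ ¬ (tails T).getD j 0 = n - 1 - j)).card
        = ((Finset.range (n - 1)).filter (fun j => s ≤ (tails T).getD j 0)).card := by
      rw [← Finset.filter_filter, ← Finset.filter_filter]
      exact Finset.card_filter_add_card_filter_not
        (p := fun j : ℕ => (tails T).getD j 0 = n - 1 - j)
    -- the count of positions with tail ≥ s equals the count of diagonals with tail ≥ s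
    have hcB : ((Finset.range (n - 1)).filter (fun j => s ≤ (tails T).getD j 0)).card
        = (T.filter (fun p => s ≤ p.1)).card := by
      rcases Nat.eq_zero_or_pos s with rfl | hs
      · have h1 : (Finset.range (n - 1)).filter (fun j => 0 ≤ (tails T).getD j 0)
            = Finset.range (n - 1) :=
          Finset.filter_true_of_mem (fun x _ => Nat.zero_le _)
        have h2 : T.filter (fun p : ℕ × ℕ => 0 ≤ p.1) = T :=
          Finset.filter_true_of_mem (fun x _ => Nat.zero_le _)
        rw [h1, h2, Finset.card_range, hcard']
      · have key : ∀ j, s ≤ (tails T).getD j 0 ↔ j < (T.filter (fun p => s ≤ p.1)).card := by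
          intro j
          rw [getD_ge_iff hsort hs j, hcount]
        have hle : (T.filter (fun p => s ≤ p.1)).card ≤ n - 1 := by
          calc (T.filter (fun p => s ≤ p.1)).card ≤ T.card := Finset.card_filter_le _ _
          _ = n - 1 := hcard'
        rw [Finset.filter_congr (fun j _ => key j)]
        have : (Finset.range (n - 1)).filter (fun j => j < (T.filter (fun p => s ≤ p.1)).card)
            = Finset.range ((T.filter (fun p => s ≤ p.1)).card) := by
          ext j
          simp only [Finset.mem_filter, Finset.mem_range]
          omega
        rw [this, Finset.card_range]
    -- bijection between diagonals at vertex n+1 with tail ≥ s and equality rows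
    have hEG : (T.filter (fun p => s ≤ p.1 ∧ p.2 = n + 1)).card
        = ((Finset.range (n - 1)).filter
            (fun j => s ≤ (tails T).getD j 0 ∧ (tails T).getD j 0 = n - 1 - j)).card := by
      have hcg : ∀ j ∈ Finset.range (n - 1),
          ((s ≤ (tails T).getD j 0 ∧ (tails T).getD j 0 = n - 1 - j)
            ↔ (s ≤ n - 1 - j ∧ (n - 1 - j, n + 1) ∈ T)) := by
        intro j hj
        rw [Finset.mem_range] at hj
        have h1 := hiff j hj
        have hb := hbd j hj
        constructor
        · rintro ⟨ha, hb2⟩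
          exact ⟨by omega, h1.1 hb2⟩
        · rintro ⟨ha, hm⟩
          have := h1.2 hm
          exact ⟨by omega, this⟩
      rw [Finset.filter_congr hcg]
      apply Finset.card_bij (fun p _ => n - 1 - p.1)
      · intro p hp
        rw [Finset.mem_filter] at hp
        obtain ⟨hpT, hps, hp2⟩ := hp
        obtain ⟨h1, h2, h3⟩ := hdiag p hpT
        have hp1pos : 1 ≤ p.1 := by omega
        have hp1le : p.1 ≤ n - 1 := by omega
        rw [Finset.mem_filter, Finset.mem_range]
        refine ⟨by omega, by omega, ?_⟩
        have : (n - 1 - (n - 1 - p.1), n + 1) = p := by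
          rw [Prod.ext_iff]
          exact ⟨by omega, by omega⟩
        rw [this]
        exact hpT
      · intro p hp q hq hpq
        rw [Finset.mem_filter] at hp hq
        obtain ⟨hpT, hps, hp2⟩ := hp
        obtain ⟨hqT, hqs, hq2⟩ := hq
        obtain ⟨ha1, ha2, ha3⟩ := hdiag p hpT
        obtain ⟨hb1, hb2, hb3⟩ := hdiag q hqT
        rw [Prod.ext_iff]
        exact ⟨by omega, by omega⟩
      · intro j hj
        rw [Finset.mem_filter, Finset.mem_range] at hj
        obtain ⟨hjlt, hjs, hjm⟩ := hj
        refine ⟨(n - 1 - j, n + 1), ?_, by omega⟩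
        rw [Finset.mem_filter]
        exact ⟨hjm, hjs, rfl⟩
    omega
end

section
/- The quivers A_n^alt (the path graph on n vertices with alternating edge orientations: 1→2←3→4←...) and the linearly oriented quiver A_n (1→2→3→...→n) are mutation equivalent. -/
/-- Quiver mutation at vertex `k`, in terms of the skew-symmetric exchange
matrix of the quiver (`B i j` = number of arrows from `i` to `j`, counted with
sign): reverse all arrows incident to `k` and for each pair of arrows
`i → k → j` add an arrow `i → j`, cancelling `2`-cycles. -/
def mutateMat {n : ℕ} (B : Fin n → Fin n → ℤ) (k : Fin n) : Fin n → Fin n → ℤ :=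
  fun i j =>
    if i = k ∨ j = k then -B i j
    else B i j + max (B i k) 0 * max (B k j) 0 - max (-B i k) 0 * max (-B k j) 0

def pm (n : ℕ) (ε : ℕ → ℤ) : Fin n → Fin n → ℤ := fun i j =>
  if (j : ℕ) = (i : ℕ) + 1 then ε i else if (i : ℕ) = (j : ℕ) + 1 then -(ε j) else 0

lemma pm_congr {n : ℕ} {ε ε' : ℕ → ℤ} (h : ∀ i, i + 1 < n → ε i = ε' i) :
    pm n ε = pm n ε' := by
  funext i j
  simp only [pm]
  split_ifs with h1 h2
  · exact h i (by have := j.isLt; omega)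
  · rw [h j (by have := i.isLt; omega)]
  · rfl

lemma key_max (x y : ℤ) (hxy : x = -y) :
    max x 0 * max y 0 = max (-x) 0 * max (-y) 0 := by
  subst hxy; rw [neg_neg, mul_comm]

lemma mutate_pm (n : ℕ) (ε : ℕ → ℤ) (k : Fin n)
    (h : 1 ≤ (k : ℕ) → (k : ℕ) + 1 < n → ε ((k : ℕ) - 1) = -ε (k : ℕ)) :
    mutateMat (pm n ε) k =
      pm n (fun i => if i + 1 = (k : ℕ) ∨ i = (k : ℕ) then -ε i else ε i) := by
  funext i j
  simp only [mutateMat]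
  by_cases hk : i = k ∨ j = k
  · rw [if_pos hk]
    have hk' : (i : ℕ) = (k : ℕ) ∨ (j : ℕ) = (k : ℕ) :=
      hk.imp (congrArg Fin.val) (congrArg Fin.val)
    clear hk
    simp only [pm]
    split_ifs <;> first | rfl | (exfalso; omega) | ring
  · rw [if_neg hk]
    push_neg at hk
    obtain ⟨hik, hjk⟩ := hk
    have hik' : (i : ℕ) ≠ (k : ℕ) := fun hh => hik (Fin.ext hh)
    have hjk' : (j : ℕ) ≠ (k : ℕ) := fun hh => hjk (Fin.ext hh)
    have e1 : pm n (fun i => if i + 1 = (k : ℕ) ∨ i = (k : ℕ) then -ε i else ε i) i j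
        = pm n ε i j := by
      simp only [pm]
      split_ifs with h1 h2 <;> first | rfl | (exfalso; omega)
    rw [e1]
    have e2 : max (pm n ε i k) 0 * max (pm n ε k j) 0
        = max (-pm n ε i k) 0 * max (-pm n ε k j) 0 := by
      by_cases u1 : (k : ℕ) = (i : ℕ) + 1
      · have hPik : pm n ε i k = ε (i : ℕ) := by
          simp only [pm, if_pos u1]
        by_cases v1 : (j : ℕ) = (k : ℕ) + 1
        · have hPkj : pm n ε k j = ε (k : ℕ) := by
            simp only [pm, if_pos v1]
          have hb : ε (i : ℕ) = -ε (k : ℕ) := by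
            have := h (by omega) (by have := j.isLt; omega)
            rwa [show (k : ℕ) - 1 = (i : ℕ) by omega] at this
          rw [hPik, hPkj]
          exact key_max _ _ hb
        · by_cases v2 : (k : ℕ) = (j : ℕ) + 1
          · have hPkj : pm n ε k j = -ε (j : ℕ) := by
              simp only [pm, if_neg v1, if_pos v2]
            rw [hPik, hPkj]
            exact key_max _ _ (by rw [show (i:ℕ) = (j:ℕ) by omega, neg_neg])
          · have hPkj : pm n ε k j = 0 := by
              simp only [pm, if_neg v1, if_neg v2]
            rw [hPkj]; simp
      · by_cases u2 : (i : ℕ) = (k : ℕ) + 1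
        · have hPik : pm n ε i k = -ε (k : ℕ) := by
            simp only [pm, if_neg (show ¬(k:ℕ) = (i:ℕ)+1 from u1), if_pos u2]
          by_cases v1 : (j : ℕ) = (k : ℕ) + 1
          · have hPkj : pm n ε k j = ε (k : ℕ) := by
              simp only [pm, if_pos v1]
            rw [hPik, hPkj, mul_comm, neg_neg]
          · by_cases v2 : (k : ℕ) = (j : ℕ) + 1
            · have hPkj : pm n ε k j = -ε (j : ℕ) := by
                simp only [pm, if_neg v1, if_pos v2]
              have hb : ε (j : ℕ) = -ε (k : ℕ) := by
                have := h (by omega) (by have := i.isLt; omega)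
                rwa [show (k : ℕ) - 1 = (j : ℕ) by omega] at this
              rw [hPik, hPkj, hb, neg_neg, mul_comm]
            · have hPkj : pm n ε k j = 0 := by
                simp only [pm, if_neg v1, if_neg v2]
              rw [hPkj]; simp
        · have hPik : pm n ε i k = 0 := by
            simp only [pm, if_neg u1, if_neg u2]
          rw [hPik]; simp
    rw [e2]; ring

/-- Orientation after all "minuses" at odd positions `≥ s` have been removed. -/
def st (s : ℕ) : ℕ → ℤ := fun i => if i < s ∧ ¬ Even i then -1 else 1

/-- Orientation `st s` with an extra minus at position `p`. -/
def mv (s p : ℕ) : ℕ → ℤ := fun i => if (i < s ∧ ¬ Even i) ∨ i = p then -1 else 1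

lemma move (n s : ℕ) : ∀ d p, p + d = n - 2 → s ≤ p →
    Relation.ReflTransGen (fun X Y => ∃ k, Y = mutateMat X k)
      (pm n (mv s p)) (pm n (st s)) := by
  intro d
  induction d with
  | zero =>
    intro p hp hsp
    rcases Nat.eq_zero_or_pos n with rfl | hn
    · have : pm 0 (mv s p) = pm 0 (st s) := by
        funext i; exact i.elim0
      rw [this]
    · refine Relation.ReflTransGen.single ⟨⟨n - 1, by omega⟩, ?_⟩
      rw [mutate_pm n (mv s p) ⟨n - 1, by omega⟩ (fun _ h2 => absurd h2 (by simp; omega))]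
      refine pm_congr fun i hi => ?_
      show st s i = if i + 1 = n - 1 ∨ i = n - 1 then -(mv s p i) else mv s p i
      by_cases hip : i = p
    -- here i = p = n - 2
      · subst hip
        rw [if_pos (Or.inl (by omega))]
        show (if i < s ∧ ¬ Even i then (-1:ℤ) else 1)
            = -(if (i < s ∧ ¬ Even i) ∨ i = i then (-1:ℤ) else 1)
        rw [if_neg (fun hh => by omega), if_pos (Or.inr rfl)]
        norm_num
      · rw [if_neg (by omega)]
        show (if i < s ∧ ¬ Even i then (-1:ℤ) else 1)
            = (if (i < s ∧ ¬ Even i) ∨ i = p then (-1:ℤ) else 1)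
        by_cases h2 : i < s ∧ ¬ Even i
        · rw [if_pos h2, if_pos (Or.inl h2)]
        · rw [if_neg h2, if_neg (by tauto)]
  | succ d ih =>
    intro p hp hsp
    have hn : p + 1 + 1 < n := by omega
    refine Relation.ReflTransGen.head ⟨⟨p + 1, by omega⟩, ?_⟩
      (ih (p + 1) (by omega) (by omega))
    rw [mutate_pm n (mv s p) ⟨p + 1, by omega⟩ ?side]
    case side =>
      intro _ _
      show mv s p (p + 1 - 1) = -(mv s p (p + 1))
      rw [Nat.add_sub_cancel]
      show (if (p < s ∧ ¬ Even p) ∨ p = p then (-1:ℤ) else 1)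
          = -(if (p + 1 < s ∧ ¬ Even (p + 1)) ∨ p + 1 = p then (-1:ℤ) else 1)
      rw [if_pos (Or.inr rfl), if_neg (by rintro (⟨hh, -⟩ | hh) <;> omega)]
    refine pm_congr fun i hi => ?_
    show mv s (p + 1) i = if i + 1 = p + 1 ∨ i = p + 1 then -(mv s p i) else mv s p i
    by_cases hip : i = p
    · subst hip
      rw [if_pos (Or.inl rfl)]
      show (if (i < s ∧ ¬ Even i) ∨ i = i + 1 then (-1:ℤ) else 1)
          = -(if (i < s ∧ ¬ Even i) ∨ i = i then (-1:ℤ) else 1)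
      rw [if_neg (by rintro (⟨hh, -⟩ | hh) <;> omega), if_pos (Or.inr rfl)]
      norm_num
    · by_cases hip1 : i = p + 1
      · subst hip1
        rw [if_pos (Or.inr rfl)]
        show (if (p + 1 < s ∧ ¬ Even (p + 1)) ∨ p + 1 = p + 1 then (-1:ℤ) else 1)
            = -(if (p + 1 < s ∧ ¬ Even (p + 1)) ∨ p + 1 = p then (-1:ℤ) else 1)
        rw [if_pos (Or.inr rfl), if_neg (by rintro (⟨hh, -⟩ | hh) <;> omega)]
      · rw [if_neg (by omega)]
        show (if (i < s ∧ ¬ Even i) ∨ i = p + 1 then (-1:ℤ) else 1)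
            = (if (i < s ∧ ¬ Even i) ∨ i = p then (-1:ℤ) else 1)
        by_cases h2 : i < s ∧ ¬ Even i
        · rw [if_pos (Or.inl h2), if_pos (Or.inl h2)]
        · rw [if_neg (by tauto), if_neg (by tauto)]

lemma outer (n : ℕ) : ∀ s, Relation.ReflTransGen (fun X Y => ∃ k, Y = mutateMat X k)
    (pm n (st s)) (pm n (st 0)) := by
  intro s
  induction s with
  | zero => exact Relation.ReflTransGen.refl
  | succ s ih =>
    refine Relation.ReflTransGen.trans ?_ ih
    by_cases he : Even s
    · have : st (s + 1) = st s := by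
        funext i
        show (if i < s + 1 ∧ ¬ Even i then (-1:ℤ) else 1)
            = (if i < s ∧ ¬ Even i then (-1:ℤ) else 1)
        by_cases hoe : Even i
        · rw [if_neg (by tauto), if_neg (by tauto)]
        · have hne : i ≠ s := fun hh => hoe (hh ▸ he)
          by_cases hlt : i < s
          · rw [if_pos ⟨by omega, hoe⟩, if_pos ⟨hlt, hoe⟩]
          · rw [if_neg (by rintro ⟨hh, -⟩; omega), if_neg (by tauto)]
      rw [this]
    · by_cases hn : s + 1 < n
      · have h0 : pm n (st (s + 1)) = pm n (mv s s) := by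
          refine congrArg (pm n) (funext fun i => ?_)
          show (if i < s + 1 ∧ ¬ Even i then (-1:ℤ) else 1)
              = (if (i < s ∧ ¬ Even i) ∨ i = s then (-1:ℤ) else 1)
          by_cases hip : i = s
          · subst hip
            rw [if_pos ⟨by omega, he⟩, if_pos (Or.inr rfl)]
          · by_cases h2 : i < s ∧ ¬ Even i
            · rw [if_pos ⟨by omega, h2.2⟩, if_pos (Or.inl h2)]
            · rw [if_neg (by rintro ⟨hh, hh'⟩; exact h2 ⟨by omega, hh'⟩),
                if_neg (by tauto)]
        rw [h0]
        exact move n s (n - 2 - s) s (by omega) le_rfl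
      · rw [pm_congr (ε' := st s) fun i hi => ?_]
        show (if i < s + 1 ∧ ¬ Even i then (-1:ℤ) else 1)
            = (if i < s ∧ ¬ Even i then (-1:ℤ) else 1)
        have h1 : i < s := by omega
        by_cases hoe : Even i
        · rw [if_neg (by tauto), if_neg (by tauto)]
        · rw [if_pos ⟨by omega, hoe⟩, if_pos ⟨h1, hoe⟩]

/-- Two quivers (exchange matrices) are mutation equivalent if one can be
obtained from the other by a finite sequence of mutations, up to an
isomorphism (relabelling of the vertices). -/
def MutationEquiv {n : ℕ} (B B' : Fin n → Fin n → ℤ) : Prop :=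
  ∃ σ : Equiv.Perm (Fin n),
    Relation.ReflTransGen (fun X Y => ∃ k, Y = mutateMat X k) B
      (fun i j => B' (σ i) (σ j))

/-- The linearly oriented quiver `A_n`: arrows `i → i+1`. -/
def linA (n : ℕ) : Fin n → Fin n → ℤ := fun i j =>
  if (j : ℕ) = i + 1 then 1 else if (i : ℕ) = j + 1 then -1 else 0

/-- The alternating quiver `A_n^alt`: the path graph on `n` vertices with
alternating orientations `1 → 2 ← 3 → 4 ← …` (here `0`-indexed). -/
def altA (n : ℕ) : Fin n → Fin n → ℤ := fun i j =>
  if (j : ℕ) = i + 1 then (if Even (i : ℕ) then 1 else -1)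
  else if (i : ℕ) = j + 1 then (if Even (j : ℕ) then -1 else 1)
  else 0

/-- The quivers `A_n^alt` (alternating orientation of the path) and the linearly
oriented quiver `A_n` are mutation equivalent. -/
theorem altA_mutationEquiv_linA (n : ℕ) : MutationEquiv (altA n) (linA n) := by
  refine ⟨Equiv.refl _, ?_⟩
  have h1 : altA n = pm n (st n) := by
    funext i j
    simp only [altA, pm, st]
    have hi := i.isLt
    have hj := j.isLt
    by_cases e1 : (j : ℕ) = (i : ℕ) + 1
    · rw [if_pos e1, if_pos e1]
      by_cases hEi : Even (i : ℕ)
      · rw [if_pos hEi, if_neg (by tauto)]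
      · rw [if_neg hEi, if_pos ⟨hi, hEi⟩]
    · rw [if_neg e1, if_neg e1]
      by_cases e2 : (i : ℕ) = (j : ℕ) + 1
      · rw [if_pos e2, if_pos e2]
        by_cases hEj : Even (j : ℕ)
        · rw [if_pos hEj, if_neg (by tauto)]
        · rw [if_neg hEj, if_pos ⟨hj, hEj⟩]
          norm_num
      · rw [if_neg e2, if_neg e2]
  have h2 : (fun i j => linA n ((Equiv.refl (Fin n)) i) ((Equiv.refl (Fin n)) j))
      = pm n (st 0) := by
    funext i j
    simp only [linA, pm, st, Equiv.refl_apply]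
    split_ifs <;> first | rfl | omega | norm_num
  rw [h1, h2]
  exact outer n n
end
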